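/- Let H and K be complex Hilbert spaces, let M ⊆ H and N ⊆ K be closed subspaces with orthogonal projections P_M ∈ B(H) and P_N ∈ B(K), and let T ∈ B(H,K). Then the following are equivalent: (i) there exist M_r ∈ B(H) and M_l ∈ B(K) with (1−P_M)M_r = M_r, M_l(1−P_N) = M_l, (1−P_N)T M_r = (1−P_N)T, and M_l T(1−P_M) = T(1−P_M); (iii) there exist idempotents P ∈ B(H) (P² = P) and Q ∈ B(K) (Q² = Q) such that range(P*) = M, range(T∘P) ⊆ N, range(Q) = N, and range((Q∘T)*) ⊆ M. -/

import Mathlib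

open ContinuousLinearMap
open scoped InnerProductSpace

/-- Hilbert-space case of Proposition 4.2, equivalence (i) ⟺ (iii):
`T` is `(M,N)`-complementable iff there are suitable idempotents `P` and `Q`. -/
theorem complementable_iff_idempotents
    {H K : Type*} [NormedAddCommGroup H] [InnerProductSpace ℂ H] [CompleteSpace H]
    [NormedAddCommGroup K] [InnerProductSpace ℂ K] [CompleteSpace K]
    (M : Submodule ℂ H) (N : Submodule ℂ K)
    (P_M : H →L[ℂ] H) (P_N : K →L[ℂ] K)
    -- `P_M` is the orthogonal projection of `H` onto the (closed) subspace `M`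
    (hPM_sa : ContinuousLinearMap.adjoint P_M = P_M)
    (hPM_mem : ∀ x : H, P_M x ∈ M) (hPM_fix : ∀ x ∈ M, P_M x = x)
    -- `P_N` is the orthogonal projection of `K` onto the (closed) subspace `N`
    (hPN_sa : ContinuousLinearMap.adjoint P_N = P_N)
    (hPN_mem : ∀ y : K, P_N y ∈ N) (hPN_fix : ∀ y ∈ N, P_N y = y)
    (T : H →L[ℂ] K) :
    (∃ (Mr : H →L[ℂ] H) (Ml : K →L[ℂ] K),
      (1 - P_M).comp Mr = Mr ∧ Ml.comp (1 - P_N) = Ml ∧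
      ((1 - P_N).comp T).comp Mr = (1 - P_N).comp T ∧
      (Ml.comp T).comp (1 - P_M) = T.comp (1 - P_M)) ↔
    (∃ (P : H →L[ℂ] H) (Q : K →L[ℂ] K),
      P.comp P = P ∧ Q.comp Q = Q ∧
      Set.range (ContinuousLinearMap.adjoint P) = (M : Set H) ∧
      Set.range (T.comp P) ⊆ (N : Set K) ∧
      Set.range Q = (N : Set K) ∧
      Set.range (ContinuousLinearMap.adjoint (Q.comp T)) ⊆ (M : Set H)) := by
  have hPM2 : ∀ x : H, P_M (P_M x) = P_M x := fun x => hPM_fix _ (hPM_mem x)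
  have hPN2 : ∀ y : K, P_N (P_N y) = P_N y := fun y => hPN_fix _ (hPN_mem y)
  have hPMsym : ∀ a b : H, ⟪P_M a, b⟫_ℂ = ⟪a, P_M b⟫_ℂ := by
    intro a b
    conv_lhs => rw [← hPM_sa]
    exact ContinuousLinearMap.adjoint_inner_left _ _ _
  have hperpM : ∀ (x : H), ∀ m ∈ M, ⟪x - P_M x, m⟫_ℂ = 0 := by
    intro x m hm
    rw [inner_sub_left, hPMsym, hPM_fix m hm, sub_self]
  constructor
  · rintro ⟨Mr, Ml, hMr, hMl, hTMr, hMlT⟩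
    -- pointwise consequences of the hypotheses
    have hPMMr : ∀ x, P_M (Mr x) = 0 := by
      intro x
      have h := ContinuousLinearMap.ext_iff.mp hMr x
      simp only [comp_apply, sub_apply, one_apply] at h
      exact sub_eq_self.mp h
    have hMlPN : ∀ y, Ml (P_N y) = 0 := by
      intro y
      have h := ContinuousLinearMap.ext_iff.mp hMl y
      simp only [comp_apply, sub_apply, one_apply, map_sub] at h
      exact sub_eq_self.mp h
    have hMrstar : ∀ m ∈ M, ContinuousLinearMap.adjoint Mr m = 0 := by
      intro m hm
      rw [← inner_self_eq_zero (𝕜 := ℂ)]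
      rw [ContinuousLinearMap.adjoint_inner_left, ← hPM_fix m hm, hPMsym, hPMMr,
        inner_zero_right]
    refine ⟨(1 - Mr).comp P_M, P_N.comp (1 - Ml), ?_, ?_, ?_, ?_, ?_, ?_⟩
    · ext x
      simp [comp_apply, sub_apply, one_apply, map_sub, hPM2, hPMMr]
    · ext y
      simp [comp_apply, sub_apply, one_apply, map_sub, hPN2, hMlPN]
    · -- range of the adjoint is M
      have hPadj : ContinuousLinearMap.adjoint ((1 - Mr).comp P_M)
          = P_M.comp (1 - ContinuousLinearMap.adjoint Mr) := by
        have hsub : (1 : H →L[ℂ] H) - ContinuousLinearMap.adjoint Mr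
            = ContinuousLinearMap.adjoint (1 - Mr) := by
          rw [ContinuousLinearMap.eq_adjoint_iff]
          intro x y
          simp [inner_sub_left, inner_sub_right,
            ContinuousLinearMap.adjoint_inner_left]
        rw [ContinuousLinearMap.adjoint_comp, hPM_sa, ← hsub]
      ext y
      simp only [Set.mem_range, SetLike.mem_coe]
      constructor
      · rintro ⟨x, rfl⟩
        rw [hPadj]
        exact hPM_mem _
      · intro hy
        refine ⟨y, ?_⟩
        rw [hPadj]
        simp only [comp_apply, sub_apply, one_apply, hMrstar y hy, sub_zero]
        exact hPM_fix y hy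
    · -- range (T ∘ P) ⊆ N
      rintro _ ⟨x, rfl⟩
      have h := ContinuousLinearMap.ext_iff.mp hTMr (P_M x)
      simp only [comp_apply, sub_apply, one_apply_eq_self] at h
      have key : (T.comp ((1 - Mr).comp P_M)) x
          = P_N (T (P_M x) - T (Mr (P_M x))) := by
        have h3 : (T (P_M x) - T (Mr (P_M x)))
            - (P_N (T (P_M x)) - P_N (T (Mr (P_M x)))) = 0 := by
          rw [show (T (P_M x) - T (Mr (P_M x)))
              - (P_N (T (P_M x)) - P_N (T (Mr (P_M x))))
              = (T (P_M x) - P_N (T (P_M x)))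
                - (T (Mr (P_M x)) - P_N (T (Mr (P_M x)))) by abel, ← h, sub_self]
        have h4 := sub_eq_zero.mp h3
        simp only [comp_apply, sub_apply, one_apply_eq_self, map_sub]
        rw [h4]
      rw [SetLike.mem_coe, key]
      exact hPN_mem _
    · -- range Q = N
      ext y
      simp only [Set.mem_range, SetLike.mem_coe]
      constructor
      · rintro ⟨x, rfl⟩
        exact hPN_mem _
      · intro hy
        refine ⟨y, ?_⟩
        have hMly : Ml y = 0 := by rw [← hPN_fix y hy]; exact hMlPN y
        simp only [comp_apply, sub_apply, one_apply, hMly, sub_zero]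
        exact hPN_fix y hy
    · -- range ((Q ∘ T)†) ⊆ M
      rintro _ ⟨x, rfl⟩
      set Q := P_N.comp (1 - Ml) with hQdef
      have hQT : ∀ z, Q (T z) = Q (T (P_M z)) := by
        intro z
        have h := ContinuousLinearMap.ext_iff.mp hMlT z
        simp only [comp_apply, sub_apply, one_apply_eq_self, map_sub] at h
        have h0 : Q (T z - T (P_M z)) = 0 := by
          have h' : Ml (T z - T (P_M z)) = T z - T (P_M z) := by
            rw [map_sub]; exact h
          simp only [hQdef, comp_apply, sub_apply, one_apply_eq_self, h', sub_self, map_zero]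
        have h1 : Q (T z - T (P_M z)) = Q (T z) - Q (T (P_M z)) := map_sub Q _ _
        rw [h1] at h0
        exact sub_eq_zero.mp h0
      set w := ContinuousLinearMap.adjoint (Q.comp T) x with hwdef
      have hw : w = P_M w := by
        refine ext_inner_right ℂ fun z => ?_
        rw [hPMsym w z, hwdef, ContinuousLinearMap.adjoint_inner_left,
          ContinuousLinearMap.adjoint_inner_left]
        simp only [comp_apply]
        rw [hQT z]
      rw [SetLike.mem_coe, hw]
      exact hPM_mem w
  · rintro ⟨P, Q, hP2, hQ2, hPrange, hTP, hQrange, hQTrange⟩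
    have hPP : ∀ x, P (P x) = P x := by
      intro x
      have h := ContinuousLinearMap.ext_iff.mp hP2 x
      simpa using h
    have hQQ : ∀ y, Q (Q y) = Q y := by
      intro y
      have h := ContinuousLinearMap.ext_iff.mp hQ2 y
      simpa using h
    have hQPN : ∀ y, Q (P_N y) = P_N y := by
      intro y
      obtain ⟨u, hu⟩ : P_N y ∈ Set.range Q := by rw [hQrange]; exact hPN_mem y
      rw [← hu, hQQ]
    -- x - P x is orthogonal to M
    have hperpP : ∀ (x : H), ∀ m ∈ M, ⟪x - P x, m⟫_ℂ = 0 := by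
      intro x m hm
      obtain ⟨u, hu⟩ : m ∈ Set.range (ContinuousLinearMap.adjoint P) := by
        rw [hPrange]; exact hm
      rw [← hu, ContinuousLinearMap.adjoint_inner_right]
      have hz : P (x - P x) = 0 := by rw [map_sub, hPP, sub_self]
      rw [hz, inner_zero_left]
    have hPMkill : ∀ x, P_M (x - P x) = 0 := by
      intro x
      rw [← inner_self_eq_zero (𝕜 := ℂ), hPMsym, hPM2]
      exact hperpP x _ (hPM_mem _)
    refine ⟨1 - P, 1 - Q, ?_, ?_, ?_, ?_⟩
    · ext x
      simp only [comp_apply, sub_apply, one_apply_eq_self]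
      rw [hPMkill, sub_zero]
    · ext y
      simp only [comp_apply, sub_apply, one_apply_eq_self, map_sub, hQPN]
      abel
    · ext x
      have hTPx : P_N (T (P x)) = T (P x) :=
        hPN_fix _ (hTP ⟨x, rfl⟩)
      simp only [comp_apply, sub_apply, one_apply_eq_self, map_sub, hTPx]
      abel
    · ext x
      simp only [comp_apply, sub_apply, one_apply_eq_self]
      have hQ0 : Q (T (x - P_M x)) = 0 := by
        rw [← inner_self_eq_zero (𝕜 := ℂ)]
        have : ⟪(Q.comp T) (x - P_M x), Q (T (x - P_M x))⟫_ℂ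
            = ⟪x - P_M x, ContinuousLinearMap.adjoint (Q.comp T)
                (Q (T (x - P_M x)))⟫_ℂ :=
          (ContinuousLinearMap.adjoint_inner_right _ _ _).symm
        simp only [comp_apply] at this
        rw [this]
        exact hperpM x _ (hQTrange ⟨_, rfl⟩)
      rw [hQ0, sub_zero]
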